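/- Assume σA² > 0, σrec² > 0 and 0 < σcov² ≤ 4σrec². Then s is strictly decreasing on the open interval (0,1), i.e., for all 0 < ρ₁ < ρ₂ < 1 one has s(ρ₂) < s(ρ₁). (Consequently the infimum of s on (0,1) is attained in the limit ρ → 1, corresponding to the optimal splitting ratio ρ* = 1 in Proposition 2.) -/

import Mathlib

/-- The ρ-dependent factor `s(ρ)` of the high-SNR mutual information,
with `a`, `c`, `r` standing for σA², σcov², σrec². -/
noncomputable def s (a c r : ℝ) (ρ : ℝ) : ℝ :=
  (c / ρ + a) *
    (a + ((c / ρ) * (2 * r / (1 - ρ))) / ((c / ρ) + (2 * r / (1 - ρ))))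

lemma s_eq (a c r ρ : ℝ) (hc : 0 < c) (hr : 0 < r) (h0 : 0 < ρ) (h1 : ρ < 1) :
    s a c r ρ = ((c + a * ρ) * (a * (c + (2 * r - c) * ρ) + 2 * r * c)) /
      (ρ * (c + (2 * r - c) * ρ)) := by
  have h1' : 0 < 1 - ρ := by linarith
  have hD : 0 < c + (2 * r - c) * ρ := by nlinarith
  have hsum : c / ρ + 2 * r / (1 - ρ) > 0 := by positivity
  unfold s
  field_simp
  rw [eq_div_iff (by nlinarith)]; ring

/-- if σA² > 0, σrec² > 0 and 0 < σcov² ≤ 4σrec², then s is strictly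
decreasing on (0,1). -/
theorem stmt_6 (a c r : ℝ) (ha : 0 < a) (hr : 0 < r) (hc : 0 < c)
    (h4 : c ≤ 4 * r) :
    ∀ ρ₁ ρ₂ : ℝ, 0 < ρ₁ → ρ₁ < ρ₂ → ρ₂ < 1 → s a c r ρ₂ < s a c r ρ₁ := by
  intro p q hp hpq hq1
  have hq : 0 < q := lt_trans hp hpq
  have hp1 : p < 1 := lt_trans hpq hq1
  set k := 2 * r - c with hk
  have hDp : 0 < c + k * p := by nlinarith
  have hDq : 0 < c + k * q := by nlinarith
  rw [s_eq a c r p hc hr hp hp1, s_eq a c r q hc hr hq hq1]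
  rw [div_lt_div_iff₀ (by positivity) (by positivity)]
  -- key positivity of B
  have hQ : 0 < c + k * (p + q) := by nlinarith [mul_pos hc (show (0:ℝ) < 2 - (p + q) by linarith), mul_nonneg (show (0:ℝ) ≤ 4 * r - c by linarith) (show (0:ℝ) ≤ p + q by linarith)]
  have hP : 0 < c ^ 2 + c * k * (p + q) + k * (4 * r - c) * (p * q) := by
    rcases le_or_gt 0 k with hk0 | hk0
    · nlinarith [mul_nonneg (mul_nonneg hk0 (show (0:ℝ) ≤ 4 * r - c by linarith)) (mul_pos hp hq).le, mul_nonneg (mul_nonneg hc.le hk0) (show (0:ℝ) ≤ p + q by linarith), sq_nonneg c]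
    · nlinarith [mul_pos (show (0:ℝ) < -k by linarith) (show (0:ℝ) < (1 - p) + (1 - q) by linarith), mul_nonneg (mul_nonneg (show (0:ℝ) ≤ -k by linarith) (show (0:ℝ) ≤ 4 * r - c by linarith)) (show (0:ℝ) ≤ (1-p)+(1-q) - (1-p)*(1-q) by nlinarith), mul_nonneg hr.le (show (0:ℝ) ≤ 4 * r - c by linarith), mul_pos (mul_pos hc (show (0:ℝ) < -k by linarith)) (show (0:ℝ) < (1-p)+(1-q) by linarith), mul_pos hr (mul_pos (show (0:ℝ) < -k by linarith) (show (0:ℝ) < (1-p)+(1-q) by linarith))]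
  have hB : 0 < a * c * ((c + k * p) * (c + k * q)) + 2 * r * c ^ 2 * (c + k * (p + q)) + 2 * a * c * r * (k * (p * q)) := by
    have hDpq : 0 < (c + k * p) * (c + k * q) := mul_pos hDp hDq
    have : a * c * ((c + k * p) * (c + k * q)) + 2 * a * c * r * (k * (p * q)) = a * c * (c ^ 2 + c * k * (p + q) + k * (4 * r - c) * (p * q)) := by ring
    nlinarith [mul_pos (mul_pos ha hc) hP, mul_pos (mul_pos (mul_pos (show (0:ℝ) < 2*r by linarith) hc) hc) hQ]
  have hd : 0 < q - p := by linarith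
  have key : (c + a * p) * (a * (c + (2 * r - c) * p) + 2 * r * c) * (q * (c + (2 * r - c) * q)) -
      (c + a * q) * (a * (c + (2 * r - c) * q) + 2 * r * c) * (p * (c + (2 * r - c) * p)) =
      (q - p) * (a * c * ((c + k * p) * (c + k * q)) + 2 * r * c ^ 2 * (c + k * (p + q)) +
        2 * a * c * r * (k * (p * q))) := by rw [hk]; ring
  nlinarith [mul_pos hd hB, key]
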